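/- Define f, g : ℝ² → ℝ² by f(x,y) = (x, y³ + xy) and g(x,y) = (x, y³). Then f and g are not bi-Lipschitz 𝒜-equivalent: there do not exist open neighborhoods U, V of the origin in ℝ² and maps σ : U → ℝ², τ : V → ℝ² with σ(0) = 0, τ(0) = 0, σ and τ injective and bi-Lipschitz onto their (open) images, such that g(σ(x,y)) ∈ V and f(x,y) = τ(g(σ(x,y))) for all (x,y) ∈ U. (Second claim of Remark 1, showing the rank-zero hypothesis in Theorem 2 is essential.) -/

import Mathlib

/-- Second claim of Remark 1: `f(x,y) = (x, y³ + xy)` and `g(x,y) = (x, y³)`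
are not bi-Lipschitz 𝒜-equivalent as germs at the origin: there do not exist
open neighborhoods `U, V` of the origin of `ℝ²` and origin-preserving maps
`σ : U → ℝ²`, `τ : V → ℝ²`, injective and bi-Lipschitz onto their open images,
with `g(σ(z)) ∈ V` and `f(z) = τ(g(σ(z)))` for all `z ∈ U`. -/
theorem remark_1_not_biLipschitz_A_equivalent
    (f g : EuclideanSpace ℝ (Fin 2) → EuclideanSpace ℝ (Fin 2))
    (hf : ∀ v : EuclideanSpace ℝ (Fin 2),
      f v = (WithLp.equiv 2 (Fin 2 → ℝ)).symm ![v 0, (v 1) ^ 3 + v 0 * v 1])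
    (hg : ∀ v : EuclideanSpace ℝ (Fin 2),
      g v = (WithLp.equiv 2 (Fin 2 → ℝ)).symm ![v 0, (v 1) ^ 3]) :
    ¬ ∃ (U V : Set (EuclideanSpace ℝ (Fin 2)))
        (σ τ : EuclideanSpace ℝ (Fin 2) → EuclideanSpace ℝ (Fin 2)),
      IsOpen U ∧ (0 : EuclideanSpace ℝ (Fin 2)) ∈ U ∧
      IsOpen V ∧ (0 : EuclideanSpace ℝ (Fin 2)) ∈ V ∧
      σ 0 = 0 ∧ τ 0 = 0 ∧
      Set.InjOn σ U ∧ Set.InjOn τ V ∧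
      IsOpen (σ '' U) ∧ IsOpen (τ '' V) ∧
      (∃ c C : ℝ, 0 < c ∧ 0 < C ∧ ∀ a ∈ U, ∀ b ∈ U,
        c * ‖a - b‖ ≤ ‖σ a - σ b‖ ∧ ‖σ a - σ b‖ ≤ C * ‖a - b‖) ∧
      (∃ c C : ℝ, 0 < c ∧ 0 < C ∧ ∀ a ∈ V, ∀ b ∈ V,
        c * ‖a - b‖ ≤ ‖τ a - τ b‖ ∧ ‖τ a - τ b‖ ≤ C * ‖a - b‖) ∧
      (∀ z ∈ U, g (σ z) ∈ V) ∧
      (∀ z ∈ U, f z = τ (g (σ z))) := by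
  rintro ⟨U, V, σ, τ, hUopen, hU0, hVopen, hV0, -, -, hσinj, hτinj, -, -, -, -, hgV, heq⟩
  -- g is injective (globally)
  have hginj : Function.Injective g := by
    intro v w h
    rw [hg v, hg w] at h
    have h0 : v 0 = w 0 := by
      have := congrFun (congrArg (WithLp.equiv 2 (Fin 2 → ℝ)) h) 0
      simpa using this
    have h1 : (v 1) ^ 3 = (w 1) ^ 3 := by
      have := congrFun (congrArg (WithLp.equiv 2 (Fin 2 → ℝ)) h) 1
      simpa using this
    have h1' : v 1 = w 1 := by
      have hm : StrictMono (fun a : ℝ => a ^ 3) := Odd.strictMono_pow (by decide)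
      exact hm.injective h1
    ext i
    fin_cases i <;> assumption
  -- pick a ball inside U
  obtain ⟨r, hr, hball⟩ := Metric.isOpen_iff.mp hUopen 0 hU0
  set t : ℝ := min (1/2) (r/2) with ht
  have ht0 : 0 < t := lt_min (by norm_num) (by linarith)
  have ht1 : t ≤ 1/2 := min_le_left _ _
  have htr : t ≤ r/2 := min_le_right _ _
  -- two points with the same f-image
  set a : EuclideanSpace ℝ (Fin 2) := (WithLp.equiv 2 (Fin 2 → ℝ)).symm ![-t^2, t] with ha
  set b : EuclideanSpace ℝ (Fin 2) := (WithLp.equiv 2 (Fin 2 → ℝ)).symm ![-t^2, -t] with hb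
  have ha0 : a 0 = -t^2 := rfl
  have ha1 : a 1 = t := rfl
  have hb0 : b 0 = -t^2 := rfl
  have hb1 : b 1 = -t := rfl
  have hnorm : ∀ z : EuclideanSpace ℝ (Fin 2), ‖z‖ < r →  z ∈ U := by
    intro z hz
    exact hball (by simpa [Metric.mem_ball, dist_zero_right] using hz)
  have normcalc : ∀ z : EuclideanSpace ℝ (Fin 2), z 0 = -t^2 → |z 1| = t → ‖z‖ < r := by
    intro z h0 h1
    have : ‖z‖ = Real.sqrt (∑ i : Fin 2, ‖z i‖ ^ 2) := EuclideanSpace.norm_eq z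
    rw [this, Fin.sum_univ_two, h0]
    have habs : ‖z 1‖ ^ 2 = t ^ 2 := by
      rw [Real.norm_eq_abs, ← h1, sq_abs]
    rw [habs]
    have hlt : ‖(-t^2 : ℝ)‖ ^ 2 + t ^ 2 < r ^ 2 := by
      rw [norm_neg, Real.norm_eq_abs, abs_of_nonneg (sq_nonneg t)]
      have h2 : t^2 ≤ r^2/4 := by nlinarith
      have h3 : t^2 ≤ 1/4 := by nlinarith
      nlinarith [sq_nonneg t]
    calc Real.sqrt (‖(-t^2 : ℝ)‖ ^ 2 + t ^ 2) < Real.sqrt (r^2) := by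
          apply Real.sqrt_lt_sqrt (by positivity) hlt
      _ = r := Real.sqrt_sq (by linarith)
  have haU : a ∈ U := hnorm a (normcalc a ha0 (by rw [ha1, abs_of_pos ht0]))
  have hbU : b ∈ U := hnorm b (normcalc b hb0 (by rw [hb1, abs_neg, abs_of_pos ht0]))
  -- f a = f b
  have hfab : f a = f b := by
    rw [hf a, hf b, ha0, ha1, hb0, hb1]
    ring_nf
  -- derive a = b
  have : a = b := by
    apply hσinj haU hbU
    apply hginj
    apply hτinj (hgV a haU) (hgV b hbU)
    rw [← heq a haU, ← heq b hbU, hfab]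
  have : (t : ℝ) = -t := by
    have := congrFun (congrArg (WithLp.equiv 2 (Fin 2 → ℝ)) this) 1
    simpa [ha1, hb1] using this
  linarith
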